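/- If p is a prime power with p ≥ 2, then H(p, p−1) ≤ p² − 2; that is, there exist p pairwise disjoint (p−1)-element Golomb rulers contained in {1, 2, ..., p²−2}. (Theorem 4, second part.) -/

import Mathlib

/-- A finite set of naturals is a Golomb ruler if all differences of pairs of
distinct elements are distinct. -/
def IsGolomb (S : Finset ℕ) : Prop :=
  ∀ a ∈ S, ∀ b ∈ S, ∀ c ∈ S, ∀ d ∈ S, a ≠ b → c ≠ d →
    (a : ℤ) - (b : ℤ) = (c : ℤ) - (d : ℤ) → a = c ∧ b = d

/-- `A` contains `I` pairwise disjoint `J`-element Golomb rulers. -/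
def ContainsDGR (I J : ℕ) (A : Finset ℕ) : Prop :=
  ∃ f : Fin I → Finset ℕ,
    (∀ i, (f i).card = J ∧ f i ⊆ A ∧ IsGolomb (f i)) ∧
    ∀ i j, i ≠ j → Disjoint (f i) (f j)

/-- There is an `(I,J,n)`-DGR: `I` pairwise disjoint `J`-element Golomb rulers,
each a subset of `{1, 2, ..., n}`. -/
def HasDGR (I J n : ℕ) : Prop := ContainsDGR I J (Finset.Icc 1 n)

/-- `H I J` is the least positive `n` such that an `(I,J,n)`-DGR exists. -/
noncomputable def H (I J : ℕ) : ℕ := sInf {n : ℕ | 0 < n ∧ HasDGR I J n}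
open Polynomial Finset in
theorem card_fixed (r k : ℕ) [Fact r.Prime] (hk : k ≠ 0) (K : Type) [Field K] [Fintype K]
    [DecidableEq K] [CharP K r] (hcard : Fintype.card K = (r ^ k) ^ 2) :
    (Finset.univ.filter (fun x : K => x ^ (r ^ k) = x)).card = r ^ k := by
  set p := r ^ k with hpdef
  have hr2 : 2 ≤ r := (Fact.out : r.Prime).two_le
  have hp2 : 2 ≤ p := le_trans hr2 (Nat.le_self_pow hk r)
  have hp1 : 1 < p := hp2
  have hpp1 : 1 < p ^ 2 := by nlinarith
  set f : K[X] := X ^ p - X with hfdef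
  have hfne : f ≠ 0 := FiniteField.X_pow_card_sub_X_ne_zero K hp1
  have hfdeg : f.natDegree = p := FiniteField.X_pow_card_sub_X_natDegree_eq K hp1
  set g : K[X] := X ^ (p ^ 2) - X with hgdef
  have hgne : g ≠ 0 := FiniteField.X_pow_card_sub_X_ne_zero K hpp1
  have hgdeg : g.natDegree = p ^ 2 := FiniteField.X_pow_card_sub_X_natDegree_eq K hpp1
  have hgroots : g.roots = Finset.univ.val := by
    have := FiniteField.roots_X_pow_card_sub_X K
    rwa [hcard] at this
  have hgsplits : Splits g := by
    rw [splits_iff_card_roots, hgroots, hgdeg]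
    have := Finset.card_univ (α := K)
    rw [hcard] at this
    simpa using this
  have hdvd : f ∣ g := by
    have hpow : f ^ p = X ^ (p ^ 2) - X ^ p := by
      rw [hfdef, hpdef, sub_pow_char_pow (X ^ (r^k) : K[X]) X k, ← pow_mul, ← pow_two]
    have : g = f ^ p + f := by
      rw [hpow, hfdef]; ring
    rw [this]
    exact dvd_add (dvd_pow_self f (by omega)) dvd_rfl
  have hfsplits : Splits f := hgsplits.of_dvd hgne hdvd
  have hfcard : Multiset.card f.roots = p := by
    rw [splits_iff_card_roots.mp hfsplits, hfdeg]
  have hsep : f.Separable := by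
    rw [separable_def]
    have hder : derivative f = -1 := by
      rw [hfdef, derivative_sub, derivative_X_pow, derivative_X]
      have : ((p : K)) = 0 := (CharP.cast_eq_zero_iff K r p).2 (dvd_pow_self r hk)
      simp [this]
    rw [hder]
    exact (isCoprime_one_right).neg_right
  have hnodup : f.roots.Nodup := nodup_roots hsep
  have : Finset.univ.filter (fun x : K => x ^ p = x) = f.roots.toFinset := by
    ext x
    simp only [mem_filter, mem_univ, true_and, Multiset.mem_toFinset, mem_roots hfne]
    constructor
    · intro h; simp [hfdef, IsRoot, sub_eq_zero, h]
    · intro h; simp [hfdef, IsRoot, sub_eq_zero] at h; exact h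
  rw [this, Multiset.toFinset_card_of_nodup hnodup, hfcard]


open Finset in
theorem aux_hasDGR (p : ℕ) (h2 : 2 ≤ p) (K : Type) [Field K] [Fintype K] [DecidableEq K]
    (hcard : Fintype.card K = p ^ 2)
    (hhom : ∀ x y : K, (x + y) ^ p = x ^ p + y ^ p)
    (hF : (Finset.univ.filter (fun x : K => x ^ p = x)).card = p) :
    HasDGR p (p - 1) (p ^ 2 - 2) := by
  classical
  set F : Finset K := Finset.univ.filter (fun x : K => x ^ p = x) with hFdef
  have hp0 : 0 < p := by omega
  have hmemF : ∀ x : K, x ∈ F ↔ x ^ p = x := by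
    intro x; simp [hFdef]
  have h0F : (0 : K) ∈ F := by rw [hmemF]; simp [zero_pow (by omega : p ≠ 0)]
  have h1F : (1 : K) ∈ F := by rw [hmemF]; simp
  have hmulF : ∀ x y : K, x ∈ F → y ∈ F → x * y ∈ F := by
    intro x y hx hy; rw [hmemF] at *; rw [mul_pow, hx, hy]
  have haddF : ∀ x y : K, x ∈ F → y ∈ F → x + y ∈ F := by
    intro x y hx hy; rw [hmemF] at *; rw [hhom, hx, hy]
  have hnegF : ∀ x : K, x ∈ F → -x ∈ F := by
    intro x hx; rw [hmemF] at *
    have h := hhom x (-x)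
    simp only [add_neg_cancel, zero_pow (by omega : p ≠ 0)] at h
    have : (-x) ^ p = -(x ^ p) := by linear_combination -h
    rw [this, hx]
  have hsubF : ∀ x y : K, x ∈ F → y ∈ F → x - y ∈ F := by
    intro x y hx hy; rw [sub_eq_add_neg]; exact haddF _ _ hx (hnegF _ hy)
  have hinvF : ∀ x : K, x ∈ F → x⁻¹ ∈ F := by
    intro x hx; rw [hmemF] at *; rw [inv_pow, hx]
  -- θ outside F
  have hθex : ∃ θ : K, θ ∉ F := by
    by_contra h
    push_neg at h
    have : F = Finset.univ := Finset.eq_univ_iff_forall.2 h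
    rw [this, Finset.card_univ, hcard] at hF
    nlinarith
  obtain ⟨θ, hθ⟩ := hθex
  have hθkey : ∀ u v : K, u ∈ F → v ∈ F → θ * u = v → u = 0 ∧ v = 0 := by
    intro u v hu hv huv
    by_cases h : u = 0
    · constructor; exact h; rw [← huv, h, mul_zero]
    · exfalso
      apply hθ
      have : θ = v * u⁻¹ := by
        rw [← huv]; field_simp
      rw [this]; exact hmulF _ _ hv (hinvF _ hu)
  have hθ0 : θ ≠ 0 := fun h => hθ (h ▸ h0F)
  -- discrete log
  obtain ⟨ζ, hζ⟩ := IsCyclic.exists_generator (α := Kˣ)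
  set ζ' : K := (ζ : K) with hζ'def
  have hζ'0 : ζ' ≠ 0 := Units.ne_zero ζ
  have hexists : ∀ x : K, x ≠ 0 → ∃ n : ℕ, ζ' ^ n = x := by
    intro x hx
    obtain ⟨n, hn⟩ := (Submonoid.mem_powers_iff _ _).1
      ((mem_powers_iff_mem_zpowers).2 (hζ (Units.mk0 x hx)))
    exact ⟨n, by rw [hζ'def, ← Units.val_pow_eq_pow_val, hn, Units.val_mk0]⟩
  set L : K → ℕ := fun x => sInf {n : ℕ | ζ' ^ n = x} with hLdef
  have hLspec : ∀ x : K, x ≠ 0 → ζ' ^ (L x) = x := by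
    intro x hx
    exact Nat.sInf_mem (hexists x hx)
  have hordpos : 0 < orderOf ζ' := by
    rw [hζ'def, orderOf_units]
    exact orderOf_pos ζ
  have hordle : orderOf ζ' ≤ p ^ 2 - 1 := by
    rw [hζ'def, orderOf_units]
    calc orderOf ζ ≤ Fintype.card Kˣ := orderOf_le_card_univ
    _ = p ^ 2 - 1 := by rw [Fintype.card_units, hcard]
  have hLlt : ∀ x : K, x ≠ 0 → L x < p ^ 2 - 1 := by
    intro x hx
    obtain ⟨n, hn⟩ := hexists x hx
    have hw : ζ' ^ (n % orderOf ζ') = x := by rw [pow_mod_orderOf, hn]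
    have h1 : L x ≤ n % orderOf ζ' := Nat.sInf_le hw
    have h2 : n % orderOf ζ' < orderOf ζ' := Nat.mod_lt _ hordpos
    omega
  have hLinj : ∀ x y : K, x ≠ 0 → y ≠ 0 → L x = L y → x = y := by
    intro x y hx hy h
    rw [← hLspec x hx, ← hLspec y hy, h]
  have hL0 : ∀ x : K, x ≠ 0 → x ≠ 1 → L x ≠ 0 := by
    intro x hx h1 h
    apply h1
    rw [← hLspec x hx, h, pow_zero]
  -- membership of images in Icc
  have hLmem : ∀ x : K, x ≠ 0 → x ≠ 1 → L x ∈ Finset.Icc 1 (p ^ 2 - 2) := by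
    intro x hx h1
    rw [Finset.mem_Icc]
    have := hLlt x hx
    have := hL0 x hx h1
    omega
  -- the rulers in K
  set S : K → Finset K := fun c => (F.erase c⁻¹).image (fun d => c * (θ + d)) with hSdef
  set E : Finset K := (F.erase 0).image (fun a => a * θ + 1) with hEdef
  have hmemS : ∀ c x : K, x ∈ S c ↔ ∃ d, (d ∈ F ∧ d ≠ c⁻¹) ∧ c * (θ + d) = x := by
    intro c x
    simp [hSdef, Finset.mem_image, Finset.mem_erase, and_comm, eq_comm]
  have hmemE : ∀ x : K, x ∈ E ↔ ∃ a, (a ∈ F ∧ a ≠ 0) ∧ a * θ + 1 = x := by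
    intro x
    simp [hEdef, Finset.mem_image, Finset.mem_erase, and_comm, eq_comm]
  -- quadratic lemma
  have hquad : ∀ d1 d2 d3 d4 : K, d1 + d4 = d2 + d3 → d1 * d4 = d2 * d3 →
      d1 = d2 ∨ d1 = d3 := by
    intro d1 d2 d3 d4 hs hm
    have h : (d1 - d2) * (d1 - d3) = 0 := by linear_combination d1 * hs - hm
    rcases mul_eq_zero.1 h with h | h
    · left; exact sub_eq_zero.1 h
    · right; exact sub_eq_zero.1 h
  -- elements of rulers are nonzero and ≠ 1
  have hSne : ∀ c : K, c ∈ F → c ≠ 0 → ∀ x ∈ S c, x ≠ 0 ∧ x ≠ 1 := by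
    intro c hc hc0 x hx
    obtain ⟨d, ⟨hdF, _⟩, rfl⟩ := (hmemS c _).1 hx
    constructor
    · intro h
      have hθd : θ + d = 0 := by
        rcases mul_eq_zero.1 h with h' | h'
        · exact absurd h' hc0
        · exact h'
      have : θ * 1 = -d := by rw [mul_one]; linear_combination hθd
      exact one_ne_zero ((hθkey 1 (-d) h1F (hnegF _ hdF) this).1)
    · intro h
      have : θ * c = 1 - c * d := by linear_combination h
      exact hc0 (hθkey c (1 - c * d) hc (hsubF _ _ h1F (hmulF _ _ hc hdF)) this).1
  have hEne : ∀ x ∈ E, x ≠ 0 ∧ x ≠ 1 := by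
    intro x hx
    obtain ⟨a, ⟨haF, ha0⟩, rfl⟩ := (hmemE _).1 hx
    constructor
    · intro h
      have : θ * a = -1 := by linear_combination h
      exact ha0 (hθkey a (-1) haF (hnegF _ h1F) this).1
    · intro h
      have : θ * a = 0 := by linear_combination h
      exact ha0 (hθkey a 0 haF h0F this).1
  -- multiplicative Sidon property
  have hSsidon : ∀ c : K, c ∈ F → c ≠ 0 → ∀ x1 ∈ S c, ∀ x2 ∈ S c, ∀ x3 ∈ S c, ∀ x4 ∈ S c,
      x1 * x4 = x2 * x3 → x1 ≠ x2 → x3 ≠ x4 → x1 = x3 ∧ x2 = x4 := by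
    intro c hc hc0 x1 h1 x2 h2 x3 h3 x4 h4 hmul h12 h34
    obtain ⟨d1, ⟨hd1, _⟩, rfl⟩ := (hmemS c _).1 h1
    obtain ⟨d2, ⟨hd2, _⟩, rfl⟩ := (hmemS c _).1 h2
    obtain ⟨d3, ⟨hd3, _⟩, rfl⟩ := (hmemS c _).1 h3
    obtain ⟨d4, ⟨hd4, _⟩, rfl⟩ := (hmemS c _).1 h4
    have hcc : (c * c) ≠ 0 := mul_ne_zero hc0 hc0
    have hexp : (c * c) * (θ * ((d1 + d4) - (d2 + d3)) - (d2 * d3 - d1 * d4)) = 0 := by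
      linear_combination hmul
    have hkey : θ * ((d1 + d4) - (d2 + d3)) = d2 * d3 - d1 * d4 := by
      have := (mul_eq_zero.1 hexp).resolve_left hcc
      linear_combination this
    have huF : (d1 + d4) - (d2 + d3) ∈ F :=
      hsubF _ _ (haddF _ _ hd1 hd4) (haddF _ _ hd2 hd3)
    have hvF : d2 * d3 - d1 * d4 ∈ F :=
      hsubF _ _ (hmulF _ _ hd2 hd3) (hmulF _ _ hd1 hd4)
    obtain ⟨hu, hv⟩ := hθkey _ _ huF hvF hkey
    have hs : d1 + d4 = d2 + d3 := by linear_combination hu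
    have hm : d1 * d4 = d2 * d3 := by linear_combination -hv
    have hne12 : d1 ≠ d2 := by
      intro h; exact h12 (by rw [h])
    rcases hquad d1 d2 d3 d4 hs hm with h | h
    · exact absurd h hne12
    · subst h
      have : d4 = d2 := by linear_combination hs
      subst this
      exact ⟨rfl, rfl⟩
  have hEsidon : ∀ x1 ∈ E, ∀ x2 ∈ E, ∀ x3 ∈ E, ∀ x4 ∈ E,
      x1 * x4 = x2 * x3 → x1 ≠ x2 → x3 ≠ x4 → x1 = x3 ∧ x2 = x4 := by
    intro x1 h1 x2 h2 x3 h3 x4 h4 hmul h12 h34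
    obtain ⟨a1, ⟨ha1, _⟩, rfl⟩ := (hmemE _).1 h1
    obtain ⟨a2, ⟨ha2, _⟩, rfl⟩ := (hmemE _).1 h2
    obtain ⟨a3, ⟨ha3, _⟩, rfl⟩ := (hmemE _).1 h3
    obtain ⟨a4, ⟨ha4, _⟩, rfl⟩ := (hmemE _).1 h4
    have hexp : θ * (θ * (a1 * a4 - a2 * a3) - ((a2 + a3) - (a1 + a4))) = 0 := by
      linear_combination hmul
    have hkey : θ * (a1 * a4 - a2 * a3) = (a2 + a3) - (a1 + a4) := by
      have := (mul_eq_zero.1 hexp).resolve_left hθ0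
      linear_combination this
    have huF : a1 * a4 - a2 * a3 ∈ F :=
      hsubF _ _ (hmulF _ _ ha1 ha4) (hmulF _ _ ha2 ha3)
    have hvF : (a2 + a3) - (a1 + a4) ∈ F :=
      hsubF _ _ (haddF _ _ ha2 ha3) (haddF _ _ ha1 ha4)
    obtain ⟨hu, hv⟩ := hθkey _ _ huF hvF hkey
    have hs : a1 + a4 = a2 + a3 := by linear_combination -hv
    have hm : a1 * a4 = a2 * a3 := by linear_combination hu
    have hne12 : a1 ≠ a2 := by
      intro h; exact h12 (by rw [h])
    rcases hquad a1 a2 a3 a4 hs hm with h | h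
    · exact absurd h hne12
    · subst h
      have : a4 = a2 := by linear_combination hs
      subst this
      exact ⟨rfl, rfl⟩
  -- cards in K
  have hcardS : ∀ c : K, c ∈ F → c ≠ 0 → (S c).card = p - 1 := by
    intro c hc hc0
    rw [hSdef]
    rw [Finset.card_image_of_injOn]
    · rw [Finset.card_erase_of_mem (hinvF c hc), hF]
    · intro d1 _ d2 _ h
      have := mul_left_cancel₀ hc0 h
      exact add_left_cancel this
  have hcardE : E.card = p - 1 := by
    rw [hEdef]
    rw [Finset.card_image_of_injOn]
    · rw [Finset.card_erase_of_mem h0F, hF]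
    · intro a1 _ a2 _ h
      have : (a1 - a2) * θ = 0 := by linear_combination h
      have := (mul_eq_zero.1 this).resolve_right hθ0
      linear_combination this
  -- disjointness in K
  have hdisjSS : ∀ c c' : K, c ∈ F → c' ∈ F → c ≠ 0 → c' ≠ 0 → c ≠ c' →
      Disjoint (S c) (S c') := by
    intro c c' hc hc' hc0 hc'0 hne
    rw [Finset.disjoint_left]
    intro x hx hx'
    obtain ⟨d, ⟨hdF, _⟩, rfl⟩ := (hmemS c _).1 hx
    obtain ⟨d', ⟨hd'F, _⟩, heq⟩ := (hmemS c' _).1 hx'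
    have hkey : θ * (c' - c) = c * d - c' * d' := by linear_combination heq
    have := (hθkey _ _ (hsubF _ _ hc' hc)
      (hsubF _ _ (hmulF _ _ hc hdF) (hmulF _ _ hc' hd'F)) hkey).1
    exact hne (by linear_combination -this)
  have hdisjSE : ∀ c : K, c ∈ F → c ≠ 0 → Disjoint (S c) E := by
    intro c hc hc0
    rw [Finset.disjoint_left]
    intro x hx hx'
    obtain ⟨d, ⟨hdF, hdne⟩, rfl⟩ := (hmemS c _).1 hx
    obtain ⟨a, ⟨haF, _⟩, heq⟩ := (hmemE _).1 hx'
    have hkey : θ * (c - a) = 1 - c * d := by linear_combination -heq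
    obtain ⟨hu, hv⟩ := hθkey _ _ (hsubF _ _ hc haF)
      (hsubF _ _ h1F (hmulF _ _ hc hdF)) hkey
    apply hdne
    have hcd : c * d = 1 := by linear_combination -hv
    field_simp
    linear_combination hcd
  -- transfer to ℕ via L
  have himgcard : ∀ W : Finset K, (∀ x ∈ W, x ≠ 0) → (W.image L).card = W.card := by
    intro W hW
    apply Finset.card_image_of_injOn
    intro x hx y hy h
    exact hLinj x y (hW x hx) (hW y hy) h
  have himgdisj : ∀ W1 W2 : Finset K, (∀ x ∈ W1, x ≠ 0) → (∀ x ∈ W2, x ≠ 0) →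
      Disjoint W1 W2 → Disjoint (W1.image L) (W2.image L) := by
    intro W1 W2 h1 h2 hd
    rw [Finset.disjoint_left]
    intro n hn hn'
    obtain ⟨x, hx, rfl⟩ := Finset.mem_image.1 hn
    obtain ⟨y, hy, hxy⟩ := Finset.mem_image.1 hn'
    have : y = x := hLinj y x (h2 y hy) (h1 x hx) hxy
    subst this
    exact (Finset.disjoint_left.1 hd hx) hy
  have hgolomb : ∀ W : Finset K, (∀ x ∈ W, x ≠ 0) →
      (∀ x1 ∈ W, ∀ x2 ∈ W, ∀ x3 ∈ W, ∀ x4 ∈ W,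
        x1 * x4 = x2 * x3 → x1 ≠ x2 → x3 ≠ x4 → x1 = x3 ∧ x2 = x4) →
      IsGolomb (W.image L) := by
    intro W hW hsidon a ha b hb c hc d hd hab hcd heq
    obtain ⟨x1, hx1, rfl⟩ := Finset.mem_image.1 ha
    obtain ⟨x2, hx2, rfl⟩ := Finset.mem_image.1 hb
    obtain ⟨x3, hx3, rfl⟩ := Finset.mem_image.1 hc
    obtain ⟨x4, hx4, rfl⟩ := Finset.mem_image.1 hd
    have hadd : L x1 + L x4 = L x2 + L x3 := by omega
    have hmul : x1 * x4 = x2 * x3 := by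
      rw [← hLspec x1 (hW _ hx1), ← hLspec x2 (hW _ hx2), ← hLspec x3 (hW _ hx3),
        ← hLspec x4 (hW _ hx4), ← pow_add, ← pow_add, hadd]
    have hne12 : x1 ≠ x2 := fun h => hab (by rw [h])
    have hne34 : x3 ≠ x4 := fun h => hcd (by rw [h])
    obtain ⟨e1, e2⟩ := hsidon x1 hx1 x2 hx2 x3 hx3 x4 hx4 hmul hne12 hne34
    exact ⟨by rw [e1], by rw [e2]⟩
  -- assemble
  have hFcard : F.card = p := hF
  let e : Fin p ≃ {x // x ∈ F} := (F.equivFin.trans (finCongr hFcard)).symm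
  refine ⟨fun i => if (e i : K) = 0 then E.image L else (S (e i)).image L, fun i => ?_, ?_⟩
  · dsimp only
    by_cases h : (e i : K) = 0
    · rw [if_pos h]
      refine ⟨?_, ?_, ?_⟩
      · rw [himgcard E (fun x hx => (hEne x hx).1), hcardE]
      · intro n hn
        obtain ⟨x, hx, rfl⟩ := Finset.mem_image.1 hn
        exact hLmem x (hEne x hx).1 (hEne x hx).2
      · exact hgolomb E (fun x hx => (hEne x hx).1) hEsidon
    · rw [if_neg h]
      have hcF : (e i : K) ∈ F := (e i).2
      refine ⟨?_, ?_, ?_⟩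
      · rw [himgcard _ (fun x hx => (hSne _ hcF h x hx).1), hcardS _ hcF h]
      · intro n hn
        obtain ⟨x, hx, rfl⟩ := Finset.mem_image.1 hn
        exact hLmem x (hSne _ hcF h x hx).1 (hSne _ hcF h x hx).2
      · exact hgolomb _ (fun x hx => (hSne _ hcF h x hx).1) (hSsidon _ hcF h)
  · intro i j hij
    dsimp only
    have hvne : (e i : K) ≠ (e j : K) := by
      intro h
      exact hij (e.injective (Subtype.ext h))
    by_cases hi : (e i : K) = 0 <;> by_cases hj : (e j : K) = 0
    · exact absurd (hi.trans hj.symm) hvne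
    · rw [if_pos hi, if_neg hj]
      exact himgdisj _ _ (fun x hx => (hEne x hx).1)
        (fun x hx => (hSne _ (e j).2 hj x hx).1)
        (hdisjSE _ (e j).2 hj).symm
    · rw [if_neg hi, if_pos hj]
      exact himgdisj _ _ (fun x hx => (hSne _ (e i).2 hi x hx).1)
        (fun x hx => (hEne x hx).1)
        (hdisjSE _ (e i).2 hi)
    · rw [if_neg hi, if_neg hj]
      exact himgdisj _ _ (fun x hx => (hSne _ (e i).2 hi x hx).1)
        (fun x hx => (hSne _ (e j).2 hj x hx).1)
        (hdisjSS _ _ (e i).2 (e j).2 hi hj hvne)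


theorem H_primePow_pred_marks (p : ℕ) (hp : IsPrimePow p) (h2 : 2 ≤ p) :
    H p (p - 1) ≤ p ^ 2 - 2 := by
  obtain ⟨r, k, hr, hk, hrk⟩ := (isPrimePow_nat_iff p).1 hp
  subst hrk
  haveI : Fact r.Prime := ⟨hr⟩
  set p := r ^ k with hpdef
  let K := GaloisField r (2 * k)
  haveI : Fintype K := Fintype.ofFinite K
  letI : DecidableEq K := Classical.decEq K
  have hcard : Fintype.card K = p ^ 2 := by
    rw [← Nat.card_eq_fintype_card, GaloisField.card r (2 * k) (by omega), hpdef,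
      ← pow_mul, mul_comm 2 k, mul_comm k 2]
  have hhom : ∀ x y : K, (x + y) ^ p = x ^ p + y ^ p := by
    intro x y
    rw [hpdef]
    exact add_pow_char_pow x y r k
  have hF : (Finset.univ.filter (fun x : K => x ^ p = x)).card = p :=
    card_fixed r k (by omega) K hcard
  have hdgr : HasDGR p (p - 1) (p ^ 2 - 2) := aux_hasDGR p h2 K hcard hhom hF
  have hpos : 0 < p ^ 2 - 2 := by
    have : 2 * 2 ≤ p * p := Nat.mul_le_mul h2 h2
    have : p ^ 2 = p * p := sq p
    omega
  exact Nat.sInf_le ⟨hpos, hdgr⟩
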